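/- The Stratified-NMF objective Σ_{i=1}^s ‖A(i) − 𝟏 v(i)^T − W(i) H‖_F² is non-increasing under the multiplicative update W(i) ← W(i) ⊙ (A(i) H^T) ⊘ ((W(i) H + 𝟏 v(i)^T) H^T) applied to all strata simultaneously, holding v(i) and H fixed. -/

import Mathlib

open Matrix

/-- The matrix `𝟏 v(i)ᵀ` whose rows all equal `v(i)ᵀ`. -/
def onesVT {mi n : ℕ} (vi : Fin n → ℝ) : Matrix (Fin mi) (Fin n) ℝ :=
  fun _ c => vi c

lemma row_key {r n : ℕ} (A e : Fin n → ℝ) (w w' : Fin r → ℝ)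
    (H : Fin r → Fin n → ℝ)
    (hw : ∀ k, 0 < w k) (hH : ∀ k c, 0 ≤ H k c) (he : ∀ c, 0 ≤ e c)
    (hden : ∀ k, 0 < ∑ c, ((∑ l, w l * H l c) + e c) * H k c)
    (hw' : ∀ k, w' k = w k * ((∑ c, A c * H k c) /
        (∑ c, ((∑ l, w l * H l c) + e c) * H k c))) :
    ∑ c, (A c - e c - ∑ k, w' k * H k c) ^ 2
      ≤ ∑ c, (A c - e c - ∑ k, w k * H k c) ^ 2 := by
  obtain ⟨D, hD⟩ : ∃ D : Fin r → ℝ,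
      ∀ k, D k = ∑ c, ((∑ l, w l * H l c) + e c) * H k c := ⟨_, fun _ => rfl⟩
  obtain ⟨N, hN⟩ : ∃ N : Fin r → ℝ,
      ∀ k, N k = ∑ c, A c * H k c := ⟨_, fun _ => rfl⟩
  obtain ⟨d, hd⟩ : ∃ d : Fin r → ℝ, ∀ k, d k = w' k - w k := ⟨_, fun _ => rfl⟩
  have hDpos : ∀ k, 0 < D k := fun k => (hD k) ▸ hden k
  have hDne : ∀ k, D k ≠ 0 := fun k => (hDpos k).ne'
  have hwne : ∀ k, w k ≠ 0 := fun k => (hw k).ne'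
  have hw'' : ∀ k, w' k = w k * (N k / D k) := by
    intro k; rw [hN k, hD k]; exact hw' k
  have hdk : ∀ k, d k = w k * (N k - D k) / D k := by
    intro k
    rw [hd k, hw'' k]
    field_simp [hDne k]
  have key1 : ∀ k, d k * (N k - D k) = d k ^ 2 * D k / w k := by
    intro k
    rw [hdk k]
    field_simp [hDne k, hwne k]
  have hS0 : ∀ k, 0 ≤ d k ^ 2 * D k / w k :=
    fun k => div_nonneg (mul_nonneg (sq_nonneg _) (hDpos k).le) (hw k).le
  -- linear term
  have hS : ∑ c, (∑ k, d k * H k c) * ((A c - e c) - ∑ k, w k * H k c)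
      = ∑ k, d k ^ 2 * D k / w k := by
    have h1 : ∀ c, (∑ k, d k * H k c) * ((A c - e c) - ∑ k, w k * H k c)
        = ∑ k, d k * (H k c * ((A c - e c) - ∑ l, w l * H l c)) := by
      intro c; rw [Finset.sum_mul]
      exact Finset.sum_congr rfl fun k _ => by ring
    rw [Finset.sum_congr rfl fun c _ => h1 c, Finset.sum_comm]
    apply Finset.sum_congr rfl; intro k _
    rw [← Finset.mul_sum]
    have h2 : ∑ c, H k c * ((A c - e c) - ∑ l, w l * H l c) = N k - D k := by
      rw [hN k, hD k, ← Finset.sum_sub_distrib]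
      exact Finset.sum_congr rfl fun c _ => by ring
    rw [h2]; exact key1 k
  -- quadratic term
  have hQ : ∑ c, (∑ k, d k * H k c) ^ 2 ≤ ∑ k, d k ^ 2 * D k / w k := by
    have step1 : ∀ c, (∑ k, d k * H k c) ^ 2
        = ∑ k, ∑ l, (d k * H k c) * (d l * H l c) := by
      intro c; rw [sq, Finset.sum_mul_sum]
    have step2 : ∀ c : Fin n, ∑ k, ∑ l, (d k * H k c) * (d l * H l c)
        ≤ ∑ k, ∑ l, d k ^ 2 * w l / w k * (H k c * H l c) := by
      intro c
      have swap : ∑ k, ∑ l, d l ^ 2 * w k / w l * (H k c * H l c)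
          = ∑ k, ∑ l, d k ^ 2 * w l / w k * (H k c * H l c) := by
        rw [Finset.sum_comm]
        exact Finset.sum_congr rfl fun k _ =>
          Finset.sum_congr rfl fun l _ => by ring
      have sym : ∑ k, ∑ l, d k ^ 2 * w l / w k * (H k c * H l c)
          = ∑ k, ∑ l, (d k ^ 2 * w l / w k + d l ^ 2 * w k / w l) / 2
              * (H k c * H l c) := by
        have expand : ∀ k l : Fin r,
            (d k ^ 2 * w l / w k + d l ^ 2 * w k / w l) / 2 * (H k c * H l c)
            = d k ^ 2 * w l / w k * (H k c * H l c) / 2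
              + d l ^ 2 * w k / w l * (H k c * H l c) / 2 := fun k l => by ring
        simp only [expand, Finset.sum_add_distrib, ← Finset.sum_div]
        rw [swap]; ring
      rw [sym]
      apply Finset.sum_le_sum; intro k _
      apply Finset.sum_le_sum; intro l _
      have hkl : d k * d l ≤ (d k ^ 2 * w l / w k + d l ^ 2 * w k / w l) / 2 := by
        rw [div_add_div _ _ (hwne k) (hwne l), div_div,
          le_div_iff₀ (mul_pos (mul_pos (hw k) (hw l)) two_pos)]
        nlinarith [sq_nonneg (d k * w l - d l * w k)]
      calc (d k * H k c) * (d l * H l c) = (d k * d l) * (H k c * H l c) := by ring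
        _ ≤ (d k ^ 2 * w l / w k + d l ^ 2 * w k / w l) / 2 * (H k c * H l c) :=
            mul_le_mul_of_nonneg_right hkl (mul_nonneg (hH k c) (hH l c))
    have step3 : ∑ c, ∑ k, ∑ l, d k ^ 2 * w l / w k * (H k c * H l c)
        = ∑ k, d k ^ 2 / w k * (∑ c, H k c * (∑ l, w l * H l c)) := by
      rw [Finset.sum_comm]
      apply Finset.sum_congr rfl; intro k _
      simp only [Finset.mul_sum]
      apply Finset.sum_congr rfl; intro c _
      apply Finset.sum_congr rfl; intro l _
      ring
    have step4 : ∀ k, d k ^ 2 / w k * (∑ c, H k c * (∑ l, w l * H l c))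
        ≤ d k ^ 2 * D k / w k := by
      intro k
      have h1 : ∑ c, H k c * (∑ l, w l * H l c) ≤ D k := by
        rw [hD k]
        apply Finset.sum_le_sum; intro c _
        nlinarith [mul_nonneg (he c) (hH k c)]
      calc d k ^ 2 / w k * (∑ c, H k c * (∑ l, w l * H l c))
          ≤ d k ^ 2 / w k * D k :=
            mul_le_mul_of_nonneg_left h1 (div_nonneg (sq_nonneg _) (hw k).le)
        _ = d k ^ 2 * D k / w k := by ring
    calc ∑ c, (∑ k, d k * H k c) ^ 2
        = ∑ c, ∑ k, ∑ l, (d k * H k c) * (d l * H l c) :=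
          Finset.sum_congr rfl fun c _ => step1 c
      _ ≤ ∑ c, ∑ k, ∑ l, d k ^ 2 * w l / w k * (H k c * H l c) :=
          Finset.sum_le_sum fun c _ => step2 c
      _ = ∑ k, d k ^ 2 / w k * (∑ c, H k c * (∑ l, w l * H l c)) := step3
      _ ≤ ∑ k, d k ^ 2 * D k / w k := Finset.sum_le_sum fun k _ => step4 k
  -- expansion
  have hexp : ∀ c, (A c - e c - ∑ k, w' k * H k c) ^ 2
      = (A c - e c - ∑ k, w k * H k c) ^ 2
        - 2 * ((∑ k, d k * H k c) * ((A c - e c) - ∑ k, w k * H k c))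
        + (∑ k, d k * H k c) ^ 2 := by
    intro c
    have hsum : ∑ k, w' k * H k c = (∑ k, w k * H k c) + ∑ k, d k * H k c := by
      rw [← Finset.sum_add_distrib]
      exact Finset.sum_congr rfl fun k _ => by rw [hd k]; ring
    rw [hsum]; ring
  have hSnn : 0 ≤ ∑ k, d k ^ 2 * D k / w k := Finset.sum_nonneg fun k _ => hS0 k
  calc ∑ c, (A c - e c - ∑ k, w' k * H k c) ^ 2
      = ∑ c, (A c - e c - ∑ k, w k * H k c) ^ 2
        - 2 * (∑ c, (∑ k, d k * H k c) * ((A c - e c) - ∑ k, w k * H k c))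
        + ∑ c, (∑ k, d k * H k c) ^ 2 := by
        simp only [hexp]
        rw [Finset.sum_add_distrib, Finset.sum_sub_distrib, Finset.mul_sum]
    _ ≤ ∑ c, (A c - e c - ∑ k, w k * H k c) ^ 2 := by
        rw [hS]; linarith [hQ]

theorem stmt_10 {s r n : ℕ} {m : Fin s → ℕ}
    (A : ∀ i : Fin s, Matrix (Fin (m i)) (Fin n) ℝ)
    (v : Fin s → Fin n → ℝ)
    (W : ∀ i : Fin s, Matrix (Fin (m i)) (Fin r) ℝ)
    (H : Matrix (Fin r) (Fin n) ℝ)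
    (hA : ∀ i j c, 0 ≤ A i j c) (hv : ∀ i c, 0 ≤ v i c)
    (hW : ∀ i j k, 0 < W i j k) (hH : ∀ k c, 0 ≤ H k c)
    (hden : ∀ i j k, 0 < ((W i * H + onesVT (mi := m i) (v i)) * Hᵀ) j k)
    (W' : ∀ i : Fin s, Matrix (Fin (m i)) (Fin r) ℝ)
    (hW' : ∀ i j k, W' i j k = W i j k * ((A i * Hᵀ) j k
        / ((W i * H + onesVT (mi := m i) (v i)) * Hᵀ) j k)) :
    ∑ i, ∑ j, ∑ c, (A i j c - v i c - (W' i * H) j c) ^ 2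
      ≤ ∑ i, ∑ j, ∑ c, (A i j c - v i c - (W i * H) j c) ^ 2 := by
  apply Finset.sum_le_sum; intro i _
  apply Finset.sum_le_sum; intro j _
  have hconv : ∀ k, ((W i * H + onesVT (mi := m i) (v i)) * Hᵀ) j k
      = ∑ c, ((∑ l, W i j l * H l c) + v i c) * H k c := by
    intro k
    simp [Matrix.mul_apply, Matrix.add_apply, Matrix.transpose_apply, onesVT]
  simp only [Matrix.mul_apply]
  apply row_key (fun c => A i j c) (v i) (fun k => W i j k) (fun k => W' i j k)
    (fun k c => H k c) (fun k => hW i j k) (fun k c => hH k c) (fun c => hv i c)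
  · intro k; rw [← hconv]; exact hden i j k
  · intro k
    rw [hW' i j k, hconv]
    simp [Matrix.mul_apply, Matrix.transpose_apply]
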